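/- If A, B ∈ M_n(ℂ) are invertible, then for any linear subspace S of M_n(ℂ), the k-reflexivity defect satisfies rd_k(ASB) = rd_k(S), where ASB = {ASB : S ∈ S}. -/

import Mathlib

open Matrix

/-- The trace-pairing annihilator of a set of matrices. -/
def annih {α β : Type*} [Fintype α] [Fintype β] (S : Set (Matrix α β ℂ)) :
    Set (Matrix β α ℂ) := {C | ∀ A ∈ S, (C * A).trace = 0}

/-- The algebraic `k`-reflexive cover `(S_⊥ ∩ F_k)_⊥`. -/
noncomputable def RefK {α β : Type*} [Fintype α] [Fintype β] (k : ℕ)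
    (S : Set (Matrix α β ℂ)) : Set (Matrix α β ℂ) :=
  annih {C | C ∈ annih S ∧ C.rank ≤ k}

/-- The `k`-reflexivity defect. -/
noncomputable def rdK {α β : Type*} [Fintype α] [Fintype β] (k : ℕ)
    (S : Set (Matrix α β ℂ)) : ℕ :=
  Module.finrank ℂ (Submodule.span ℂ (RefK k S)) -
    Module.finrank ℂ (Submodule.span ℂ S)

/-- The `m × m` Jordan block with eigenvalue `lam`. -/
def JB (m : ℕ) (lam : ℂ) : Matrix (Fin m) (Fin m) ℂ :=
  Matrix.of fun i j => if (j : ℕ) = (i : ℕ) + 1 then 1 else if j = i then lam else 0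

/-- Upper triangular Toeplitz matrices: entry `(i,j)` depends only on `j - i`,
and vanishes when `j < i`. -/
def UTToeplitz (m : ℕ) : Set (Matrix (Fin m) (Fin m) ℂ) :=
  {C | (∀ i j : Fin m, (j : ℕ) < (i : ℕ) → C i j = 0) ∧
    ∀ i j i' j' : Fin m, (i : ℕ) + (j' : ℕ) = (i' : ℕ) + (j : ℕ) → C i j = C i' j'}

/-- Cyclic permutation of a product of four matrices under the trace. -/
lemma tr4 {n : ℕ} (W X Y Z : Matrix (Fin n) (Fin n) ℂ) :
    (W * X * Y * Z).trace = (X * Y * Z * W).trace := by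
  calc (W * X * Y * Z).trace = (W * (X * Y * Z)).trace := by
        simp only [Matrix.mul_assoc]
    _ = ((X * Y * Z) * W).trace := Matrix.trace_mul_comm _ _
    _ = (X * Y * Z * W).trace := rfl

/-- Conjugation cancellation. -/
lemma conj_cancel {n : ℕ} (X Y : Matrix (Fin n) (Fin n) ℂ)
    (hX : IsUnit X.det) (hY : IsUnit Y.det) (D : Matrix (Fin n) (Fin n) ℂ) :
    X * (X⁻¹ * D * Y⁻¹) * Y = D := by
  rw [← Matrix.mul_assoc X (X⁻¹ * D) Y⁻¹, ← Matrix.mul_assoc X X⁻¹ D,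
    Matrix.mul_nonsing_inv X hX, Matrix.one_mul, Matrix.mul_assoc D Y⁻¹ Y,
    Matrix.nonsing_inv_mul Y hY, Matrix.mul_one]

/-- The linear map `T ↦ A * T * B`. -/
noncomputable def conjMap {n : ℕ} (A B : Matrix (Fin n) (Fin n) ℂ) :
    Matrix (Fin n) (Fin n) ℂ →ₗ[ℂ] Matrix (Fin n) (Fin n) ℂ where
  toFun T := A * T * B
  map_add' x y := by noncomm_ring
  map_smul' c x := by simp [Matrix.mul_smul, Matrix.smul_mul]

/-- `T ↦ A * T * B` as a linear equivalence when `A`, `B` are invertible. -/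
noncomputable def conjEquiv {n : ℕ} (A B : Matrix (Fin n) (Fin n) ℂ)
    (hA : IsUnit A) (hB : IsUnit B) :
    Matrix (Fin n) (Fin n) ℂ ≃ₗ[ℂ] Matrix (Fin n) (Fin n) ℂ :=
  LinearEquiv.ofLinear (conjMap A B) (conjMap A⁻¹ B⁻¹)
    (by
      refine LinearMap.ext fun T => ?_
      show A * (A⁻¹ * T * B⁻¹) * B = T
      exact conj_cancel A B ((Matrix.isUnit_iff_isUnit_det A).mp hA)
        ((Matrix.isUnit_iff_isUnit_det B).mp hB) T)
    (by
      refine LinearMap.ext fun T => ?_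
      show A⁻¹ * (A * T * B) * B⁻¹ = T
      have hA' := Matrix.isUnit_nonsing_inv_det A ((Matrix.isUnit_iff_isUnit_det A).mp hA)
      have hB' := Matrix.isUnit_nonsing_inv_det B ((Matrix.isUnit_iff_isUnit_det B).mp hB)
      have := conj_cancel A⁻¹ B⁻¹ hA' hB' T
      rwa [Matrix.nonsing_inv_nonsing_inv A ((Matrix.isUnit_iff_isUnit_det A).mp hA),
        Matrix.nonsing_inv_nonsing_inv B ((Matrix.isUnit_iff_isUnit_det B).mp hB)] at this)

lemma mem_annih_image {n : ℕ} (A B : Matrix (Fin n) (Fin n) ℂ)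
    (S : Set (Matrix (Fin n) (Fin n) ℂ)) (C : Matrix (Fin n) (Fin n) ℂ) :
    C ∈ annih ((fun T => A * T * B) '' S) ↔ B * C * A ∈ annih S := by
  constructor
  · intro h s hs
    have := h (A * s * B) ⟨s, hs, rfl⟩
    rw [tr4 B C A s]
    simp only [Matrix.mul_assoc] at this ⊢
    exact this
  · rintro h T ⟨s, hs, rfl⟩
    have := h s hs
    rw [tr4 B C A s] at this
    simp only [Matrix.mul_assoc] at this ⊢
    exact this

lemma RefK_conj {n : ℕ} (k : ℕ) (A B : Matrix (Fin n) (Fin n) ℂ)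
    (hA : IsUnit A) (hB : IsUnit B) (S : Set (Matrix (Fin n) (Fin n) ℂ)) :
    RefK k ((fun T => A * T * B) '' S) = (fun T => A * T * B) '' RefK k S := by
  have hAd : IsUnit A.det := (Matrix.isUnit_iff_isUnit_det A).mp hA
  have hBd : IsUnit B.det := (Matrix.isUnit_iff_isUnit_det B).mp hB
  have hAid : IsUnit (A⁻¹).det := Matrix.isUnit_nonsing_inv_det A hAd
  have hBid : IsUnit (B⁻¹).det := Matrix.isUnit_nonsing_inv_det B hBd
  ext E
  constructor
  · intro h
    refine ⟨A⁻¹ * E * B⁻¹, ?_, conj_cancel A B hAd hBd E⟩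
    intro D hD
    have hmem : B⁻¹ * D * A⁻¹ ∈ annih ((fun T => A * T * B) '' S) := by
      rw [mem_annih_image A B, conj_cancel B A hBd hAd D]
      exact hD.1
    have hrk : (B⁻¹ * D * A⁻¹).rank ≤ k := by
      rw [Matrix.rank_mul_eq_left_of_isUnit_det A⁻¹ _ hAid,
        Matrix.rank_mul_eq_right_of_isUnit_det B⁻¹ D hBid]
      exact hD.2
    have := h (B⁻¹ * D * A⁻¹) ⟨hmem, hrk⟩
    rw [tr4 A⁻¹ E B⁻¹ D]
    simp only [Matrix.mul_assoc] at this ⊢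
    exact this
  · rintro ⟨F, hF, rfl⟩ C hC
    have hmem : B * C * A ∈ annih S := (mem_annih_image A B S C).mp hC.1
    have hrk : (B * C * A).rank ≤ k := by
      rw [Matrix.rank_mul_eq_left_of_isUnit_det A _ hAd,
        Matrix.rank_mul_eq_right_of_isUnit_det B C hBd]
      exact hC.2
    have := hF (B * C * A) ⟨hmem, hrk⟩
    rw [tr4 A F B C]
    simp only [Matrix.mul_assoc] at this ⊢
    exact this

lemma finrank_span_conj {n : ℕ} (A B : Matrix (Fin n) (Fin n) ℂ)
    (hA : IsUnit A) (hB : IsUnit B) (X : Set (Matrix (Fin n) (Fin n) ℂ)) :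
    Module.finrank ℂ (Submodule.span ℂ ((fun T => A * T * B) '' X)) =
      Module.finrank ℂ (Submodule.span ℂ X) := by
  have : (fun T => A * T * B) '' X = ⇑(conjEquiv A B hA hB) '' X := rfl
  rw [this, ← LinearEquiv.coe_coe, ← Submodule.map_span]
  exact LinearEquiv.finrank_map_eq (conjEquiv A B hA hB) _

/-- for invertible `A, B`, the `k`-reflexivity defect satisfies
`rd_k(A S B) = rd_k(S)`. -/
theorem rdk_mul_invariant (n k : ℕ) (hn : 0 < n) (hk : 0 < k)
    (A B : Matrix (Fin n) (Fin n) ℂ) (hA : IsUnit A) (hB : IsUnit B)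
    (S : Submodule ℂ (Matrix (Fin n) (Fin n) ℂ)) :
    rdK k ((fun T => A * T * B) '' (S : Set (Matrix (Fin n) (Fin n) ℂ))) =
      rdK k (S : Set (Matrix (Fin n) (Fin n) ℂ)) := by
  unfold rdK
  rw [RefK_conj k A B hA hB, finrank_span_conj A B hA hB, finrank_span_conj A B hA hB]
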